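/- Let A ∈ ℝ^{m×n}, let C consist of columns of A, and let R consist of rows of A. With U = C⁺ A R⁺, the matrix C U R equals C C⁺ A R⁺ R, i.e., the double orthogonal projection of A onto the column space of C and the row space of R. Moreover ‖A − C U R‖_F = min_X ‖A − C X R‖_F over all X ∈ ℝ^{c×r}. -/
import Mathlib


open Matrix BigOperators

def IsMPInv {m n : Type*} [Fintype m] [Fintype n] (A : Matrix m n ℝ) (B : Matrix n m ℝ) : Prop :=
  A * B * A = A ∧ B * A * B = B ∧ (A * B)ᵀ = A * B ∧ (B * A)ᵀ = B * A

-- The Moore-Penrose pseudoinverse (it exists and is unique for real matrices).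
open Classical in
noncomputable def mpinv {m n : Type*} [Fintype m] [Fintype n] (A : Matrix m n ℝ) : Matrix n m ℝ :=
  if h : ∃ B, IsMPInv A B then h.choose else 0

/-- Squared Frobenius norm. -/
def frobSq {m n : Type*} [Fintype m] [Fintype n] (A : Matrix m n ℝ) : ℝ :=
  ∑ i, ∑ j, (A i j) ^ 2

/-- Frobenius norm. -/
noncomputable def frob {m n : Type*} [Fintype m] [Fintype n] (A : Matrix m n ℝ) : ℝ :=
  Real.sqrt (frobSq A)

lemma star_real_mat {k : Type*} [Fintype k] (V : Matrix k k ℝ) : star V = Vᵀ := by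
  ext i j; simp [Matrix.star_apply]

lemma sym_mp {n : Type*} [Fintype n] [DecidableEq n] (M : Matrix n n ℝ) (hM : M.IsHermitian) :
    ∃ G : Matrix n n ℝ, M * G * M = M ∧ G * M * G = G ∧ Gᵀ = G ∧ M * G = G * M := by
  classical
  set V : Matrix n n ℝ := (hM.eigenvectorUnitary : Matrix n n ℝ) with hV
  have hVV' : star V * V = 1 := (Matrix.mem_unitaryGroup_iff').mp hM.eigenvectorUnitary.2
  set d : n → ℝ := hM.eigenvalues with hd
  set g : n → ℝ := fun i => if d i = 0 then 0 else (d i)⁻¹ with hg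
  have hspec : M = V * diagonal d * star V := by simpa using hM.spectral_theorem
  have key : ∀ a b : n → ℝ, (V * diagonal a * star V) * (V * diagonal b * star V)
      = V * diagonal (fun i => a i * b i) * star V := by
    intro a b
    rw [Matrix.mul_assoc (V * diagonal a), ← Matrix.mul_assoc (star V) (V * diagonal b),
      ← Matrix.mul_assoc (star V) V, hVV', Matrix.one_mul, ← Matrix.mul_assoc,
      Matrix.mul_assoc V, Matrix.diagonal_mul_diagonal]
  have hstar : ∀ a : n → ℝ, (V * diagonal a * star V)ᵀ = V * diagonal a * star V := by
    intro a
    rw [star_real_mat]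
    simp [Matrix.transpose_mul, Matrix.diagonal_transpose, Matrix.mul_assoc]
  have h1 : (fun i => d i * g i * d i) = d := by
    funext i
    by_cases h : d i = 0 <;> simp [hg, h]
  have h2 : (fun i => g i * d i * g i) = g := by
    funext i
    by_cases h : d i = 0 <;> simp [hg, h]
  refine ⟨V * diagonal g * star V, ?_, ?_, hstar g, ?_⟩
  · rw [hspec, key, key]; simp only [h1]
  · rw [hspec, key, key]; simp only [h2]
  · rw [hspec, key, key]
    have : (fun i => d i * g i) = (fun i => g i * d i) := by funext i; ring
    rw [this]

lemma mat_self_mul_transpose_eq_zero {p q : Type*} [Fintype p] [Fintype q]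
    (Y : Matrix p q ℝ) (h : Y * Yᵀ = 0) : Y = 0 := by
  ext i j
  have hd : (Y * Yᵀ) i i = 0 := by rw [h]; rfl
  rw [Matrix.mul_apply] at hd
  have : ∀ k ∈ Finset.univ, Y i k * Yᵀ k i = 0 := by
    intro k _
    have : ∀ k ∈ (Finset.univ : Finset q), (0:ℝ) ≤ Y i k * Yᵀ k i := by
      intro k _; rw [Matrix.transpose_apply]; exact mul_self_nonneg _
    exact (Finset.sum_eq_zero_iff_of_nonneg this).mp hd k (Finset.mem_univ k)
  have := this j (Finset.mem_univ j)
  rw [Matrix.transpose_apply] at this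
  have := mul_self_eq_zero.mp this
  simpa using this

lemma cancel_right {p m n : Type*} [Fintype p] [Fintype m] [Fintype n]
    (X : Matrix p n ℝ) (A : Matrix m n ℝ) (h : X * (Aᵀ * A) = 0) : X * Aᵀ = 0 := by
  apply mat_self_mul_transpose_eq_zero
  have : (X * Aᵀ) * (X * Aᵀ)ᵀ = (X * (Aᵀ * A)) * Xᵀ := by
    simp [Matrix.transpose_mul, Matrix.mul_assoc]
  rw [this, h, Matrix.zero_mul]

lemma mp_exists {m n : Type*} [Fintype m] [Fintype n] [DecidableEq n]
    (A : Matrix m n ℝ) : ∃ B, IsMPInv A B := by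
  have hconj : Aᴴ = Aᵀ := by ext i j; simp
  have hM : (Aᵀ * A).IsHermitian := by
    rw [← hconj]; exact Matrix.isHermitian_conjTranspose_mul_self A
  obtain ⟨G, hMGM, hGMG, hGt, hcom⟩ := sym_mp (Aᵀ * A) hM
  have e1 : Aᵀ * A * G * Aᵀ = Aᵀ := by
    have h0 : (Aᵀ * A * G - 1) * (Aᵀ * A) = 0 := by
      rw [sub_mul, Matrix.one_mul, sub_eq_zero]
      calc Aᵀ * A * G * (Aᵀ * A) = Aᵀ * A * G * (Aᵀ * A) := rfl
        _ = Aᵀ * A := hMGM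
    have h1 := cancel_right _ A h0
    rw [Matrix.sub_mul, Matrix.one_mul] at h1
    exact sub_eq_zero.mp h1
  have e2 : A * G * (Aᵀ * A) = A := by
    have := congrArg Matrix.transpose e1
    simpa [Matrix.transpose_mul, hGt, Matrix.mul_assoc] using this
  refine ⟨G * Aᵀ, ?_, ?_, ?_, ?_⟩
  · calc A * (G * Aᵀ) * A = A * G * (Aᵀ * A) := by simp [Matrix.mul_assoc]
      _ = A := e2
  · calc G * Aᵀ * A * (G * Aᵀ) = G * (Aᵀ * A * G * Aᵀ) := by simp [Matrix.mul_assoc]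
      _ = G * Aᵀ := by rw [e1]
  · have : A * (G * Aᵀ) = A * G * Aᵀ := by rw [Matrix.mul_assoc]
    rw [this]
    simp [Matrix.transpose_mul, hGt, Matrix.mul_assoc]
  · have h3 : G * Aᵀ * A = G * (Aᵀ * A) := by rw [Matrix.mul_assoc]
    rw [h3, ← hcom]
    simp [Matrix.transpose_mul, hGt, Matrix.transpose_transpose, Matrix.mul_assoc, hcom]

lemma mpinv_spec {m n : Type*} [Fintype m] [Fintype n] [DecidableEq n]
    (A : Matrix m n ℝ) : IsMPInv A (mpinv A) := by
  have h : ∃ B, IsMPInv A B := mp_exists A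
  rw [mpinv, dif_pos h]
  exact h.choose_spec

lemma frobSq_eq_trace {m n : Type*} [Fintype m] [Fintype n] (M : Matrix m n ℝ) :
    frobSq M = Matrix.trace (M * Mᵀ) := by
  simp [frobSq, Matrix.trace, Matrix.mul_apply, Matrix.diag, sq]

lemma frobSq_nonneg {m n : Type*} [Fintype m] [Fintype n] (M : Matrix m n ℝ) :
    0 ≤ frobSq M := by
  apply Finset.sum_nonneg; intro i _
  apply Finset.sum_nonneg; intro j _
  positivity

lemma frobSq_add {m n : Type*} [Fintype m] [Fintype n] (D E : Matrix m n ℝ) :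
    frobSq (D + E) = frobSq D + 2 * Matrix.trace (D * Eᵀ) + frobSq E := by
  have hED : Matrix.trace (E * Dᵀ) = Matrix.trace (D * Eᵀ) := by
    rw [← Matrix.trace_transpose (E * Dᵀ)]
    simp [Matrix.transpose_mul]
  simp only [frobSq_eq_trace, Matrix.transpose_add, Matrix.add_mul, Matrix.mul_add,
    Matrix.trace_add, hED]
  ring

/-- With `C` consisting of columns of `A`, `R` consisting of rows of `A`, and
`U = C⁺ A R⁺`, the matrix `C U R` equals the double projection `C C⁺ A R⁺ R`, and
`‖A - C U R‖_F = min_X ‖A - C X R‖_F`. -/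
theorem stmt8 {m n c r : ℕ} (A : Matrix (Fin m) (Fin n) ℝ)
    (C : Matrix (Fin m) (Fin c) ℝ) (R : Matrix (Fin r) (Fin n) ℝ)
    (hC : ∀ j, ∃ i, ∀ t, C t j = A t i)
    (hR : ∀ i, ∃ j, ∀ t, R i t = A j t)
    (U : Matrix (Fin c) (Fin r) ℝ) (hU : U = mpinv C * A * mpinv R) :
    C * U * R = C * mpinv C * A * (mpinv R * R) ∧
    (∀ X : Matrix (Fin c) (Fin r) ℝ, frob (A - C * U * R) ≤ frob (A - C * X * R)) := by
  classical
  obtain ⟨hc1, hc2, hc3, hc4⟩ := mpinv_spec C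
  obtain ⟨hr1, hr2, hr3, hr4⟩ := mpinv_spec R
  have heq : C * U * R = C * mpinv C * A * (mpinv R * R) := by
    rw [hU]; simp [Matrix.mul_assoc]
  refine ⟨heq, ?_⟩
  intro X
  set B := mpinv C with hB
  set S := mpinv R with hS
  set P : Matrix (Fin m) (Fin m) ℝ := C * B with hP
  set Q : Matrix (Fin n) (Fin n) ℝ := S * R with hQ
  have hPP : P * P = P := by
    calc C * B * (C * B) = (C * B * C) * B := by simp [Matrix.mul_assoc]
      _ = C * B := by rw [hc1]
  have hQQ : Q * Q = Q := by
    calc S * R * (S * R) = (S * R * S) * R := by simp [Matrix.mul_assoc]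
      _ = S * R := by rw [hr2]
  have hPt : Pᵀ = P := hc3
  have hQt : Qᵀ = Q := hr4
  have hPC : P * C = C := hc1
  have hRQ : R * Q = R := by rw [hQ, ← Matrix.mul_assoc]; exact hr1
  set N : Matrix (Fin m) (Fin n) ℝ := A - C * X * R with hN
  set D : Matrix (Fin m) (Fin n) ℝ := A - P * A * Q with hD
  set E : Matrix (Fin m) (Fin n) ℝ := P * A * Q - C * X * R with hE
  have hEN : E = P * N * Q := by
    have h' : P * (C * X * R) * Q = C * X * R := by
      have : P * (C * X * R) * Q = (P * C) * X * (R * Q) := by simp [Matrix.mul_assoc]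
      rw [this, hPC, hRQ]
    rw [hE, hN, Matrix.mul_sub, Matrix.sub_mul, h']
  have key2 : Matrix.trace (D * Eᵀ) = 0 := by
    have hEt : Eᵀ = Q * (Nᵀ * P) := by
      rw [hEN]
      simp [Matrix.transpose_mul, hPt, hQt, Matrix.mul_assoc]
    rw [hEt, hD, Matrix.sub_mul, Matrix.trace_sub]
    have t2 : P * A * Q * (Q * (Nᵀ * P)) = P * (A * (Q * (Nᵀ * P))) := by
      have h' : Q * (Q * (Nᵀ * P)) = Q * (Nᵀ * P) := by rw [← Matrix.mul_assoc, hQQ]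
      calc P * A * Q * (Q * (Nᵀ * P)) = P * (A * (Q * (Q * (Nᵀ * P)))) := by
            simp [Matrix.mul_assoc]
        _ = P * (A * (Q * (Nᵀ * P))) := by rw [h']
    rw [t2, Matrix.trace_mul_comm P (A * (Q * (Nᵀ * P)))]
    have t3 : A * (Q * (Nᵀ * P)) * P = A * (Q * (Nᵀ * P)) := by
      calc A * (Q * (Nᵀ * P)) * P = A * (Q * (Nᵀ * (P * P))) := by simp [Matrix.mul_assoc]
        _ = A * (Q * (Nᵀ * P)) := by rw [hPP]
    rw [t3, sub_self]
  have hsum : A - C * X * R = D + E := by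
    rw [hD, hE, sub_add_sub_cancel]
  have hsplit : frobSq (A - C * X * R) = frobSq D + frobSq E := by
    rw [hsum, frobSq_add, key2]; ring
  have hgoal : A - C * U * R = D := by
    rw [heq, hD]
  rw [hgoal, frob, frob]
  apply Real.sqrt_le_sqrt
  rw [hsplit]
  linarith [frobSq_nonneg E]
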